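/- For a > 0 and ξ > 0, set v₁ = 1/(4ξ²), v₂ = a², v₃ = √(v₁² + 2v₁v₂), V = v₁+v₂+v₃, and B = v₂/V. Then 0 < B < 1, and there exist constants C₁, C₂, C₃ > 0 depending only on ξ such that C₁·a ≤ (log(1/B))^{-1} ≤ C₂ + C₃·a for all a > 0. -/

import Mathlib

/-- Core computation: bounds for `(log (1/B))⁻¹` where `B = a²/V`. -/
lemma log_inv_B_core (v₁ a : ℝ) (h1 : 0 < v₁) (ha : 0 < a) :
    0 < a ^ 2 / (v₁ + a ^ 2 + Real.sqrt (v₁ ^ 2 + 2 * v₁ * a ^ 2)) ∧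
    a ^ 2 / (v₁ + a ^ 2 + Real.sqrt (v₁ ^ 2 + 2 * v₁ * a ^ 2)) < 1 ∧
    1 / (2 * Real.sqrt (2 * v₁)) * a ≤
      (Real.log (1 / (a ^ 2 / (v₁ + a ^ 2 + Real.sqrt (v₁ ^ 2 + 2 * v₁ * a ^ 2)))))⁻¹ ∧
    (Real.log (1 / (a ^ 2 / (v₁ + a ^ 2 + Real.sqrt (v₁ ^ 2 + 2 * v₁ * a ^ 2)))))⁻¹ ≤
      1 + 1 / Real.sqrt (2 * v₁) * a := by
  set w : ℝ := Real.sqrt (2 * v₁) with hw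
  have hw0 : 0 < w := Real.sqrt_pos.2 (by positivity)
  have hw2 : w ^ 2 = 2 * v₁ := Real.sq_sqrt (by positivity)
  set v₃ : ℝ := Real.sqrt (v₁ ^ 2 + 2 * v₁ * a ^ 2) with h3
  have hv₃ : 0 < v₃ := Real.sqrt_pos.2 (by positivity)
  -- bounds on v₃
  have h3low : w * a ≤ v₃ := by
    calc w * a = Real.sqrt ((w * a) ^ 2) := (Real.sqrt_sq (by positivity)).symm
      _ = Real.sqrt (2 * v₁ * a ^ 2) := by rw [mul_pow, hw2]
      _ ≤ v₃ := Real.sqrt_le_sqrt (by nlinarith)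
  have h3up : v₃ ≤ v₁ + w * a := by
    calc v₃ ≤ Real.sqrt ((v₁ + w * a) ^ 2) := Real.sqrt_le_sqrt (by nlinarith [hw2, mul_pos h1 (mul_pos hw0 ha)])
      _ = v₁ + w * a := Real.sqrt_sq (by positivity)
  set V : ℝ := v₁ + a ^ 2 + v₃ with hV
  have hVpos : 0 < V := by positivity
  have hB0 : 0 < a ^ 2 / V := by positivity
  have hBlt : a ^ 2 / V < 1 := (div_lt_one hVpos).2 (by nlinarith)
  have hrw : 1 / (a ^ 2 / V) = V / a ^ 2 := one_div_div _ _
  set t : ℝ := w / a with ht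
  have ht0 : 0 < t := by positivity
  -- V/a² between 1 + t and (1 + t)²
  have hta' : t * a = w := by rw [ht, div_mul_eq_mul_div, mul_div_assoc, div_self ha.ne', mul_one]
  have hta : t * a ^ 2 = w * a := by linear_combination a * hta'
  have hq1 : 1 + t ≤ V / a ^ 2 := by
    rw [le_div_iff₀ (by positivity)]
    nlinarith [hta]
  have hq2 : V / a ^ 2 ≤ (1 + t) ^ 2 := by
    rw [div_le_iff₀ (by positivity)]
    have he2 : (1 + t) ^ 2 * a ^ 2 = a ^ 2 + 2 * (w * a) + w ^ 2 := by
      linear_combination (2 * a + t * a + w) * hta'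
    nlinarith [he2, hw2, mul_pos hw0 ha]
  -- elementary log bounds
  have hlog_le : Real.log (1 + t) ≤ t :=
    le_trans (Real.log_le_sub_one_of_pos (by linarith)) (by linarith)
  have hlog_ge : t / (1 + t) ≤ Real.log (1 + t) := by
    have h := Real.log_le_sub_one_of_pos (show (0:ℝ) < 1 / (1 + t) by positivity)
    rw [one_div, Real.log_inv] at h
    have he : 1 - (1 + t)⁻¹ = t / (1 + t) := by field_simp; ring
    linarith [he ▸ (by linarith : 1 - (1 + t)⁻¹ ≤ Real.log (1 + t))]
  have hlogV_ge : t / (1 + t) ≤ Real.log (V / a ^ 2) :=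
    le_trans hlog_ge (Real.log_le_log (by linarith) hq1)
  have hlogV_le : Real.log (V / a ^ 2) ≤ 2 * t := by
    calc Real.log (V / a ^ 2) ≤ Real.log ((1 + t) ^ 2) :=
          Real.log_le_log (by positivity) hq2
      _ = 2 * Real.log (1 + t) := by
          rw [Real.log_pow]; push_cast; ring
      _ ≤ 2 * t := by linarith
  have hlogV_pos : 0 < Real.log (V / a ^ 2) := by
    have : 0 < t / (1 + t) := by positivity
    linarith
  refine ⟨hB0, hBlt, ?_, ?_⟩
  · rw [hrw]
    have h2t : (2 * t)⁻¹ ≤ (Real.log (V / a ^ 2))⁻¹ :=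
      inv_anti₀ hlogV_pos hlogV_le
    have : 1 / (2 * w) * a = (2 * t)⁻¹ := by
      field_simp [ht]; linear_combination hta'
    linarith [this ▸ h2t]
  · rw [hrw]
    have h2 : (Real.log (V / a ^ 2))⁻¹ ≤ (t / (1 + t))⁻¹ :=
      inv_anti₀ (by positivity) hlogV_ge
    have : (t / (1 + t))⁻¹ = 1 + 1 / w * a := by
      rw [inv_div]; field_simp [ht]; linear_combination -hta'
    linarith [this ▸ h2]

/-- For the eigenvalue decay rate `B = v₂/V` of the rescaled squared-exponential
kernel under Gaussian design, `0 < B < 1` and `(log(1/B))⁻¹` grows linearly in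
the rescaling level `a`: `C₁ a ≤ (log(1/B))⁻¹ ≤ C₂ + C₃ a`. -/
theorem log_inv_B_linear_growth (ξ : ℝ) (hξ : 0 < ξ) :
    ∃ C₁ C₂ C₃ : ℝ, 0 < C₁ ∧ 0 < C₂ ∧ 0 < C₃ ∧
      ∀ a : ℝ, 0 < a →
        let v₁ := 1 / (4 * ξ ^ 2)
        let v₂ := a ^ 2
        let v₃ := Real.sqrt (v₁ ^ 2 + 2 * v₁ * v₂)
        let V := v₁ + v₂ + v₃
        let B := v₂ / V
        0 < B ∧ B < 1 ∧
          C₁ * a ≤ (Real.log (1 / B))⁻¹ ∧ (Real.log (1 / B))⁻¹ ≤ C₂ + C₃ * a := by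
  refine ⟨1 / (2 * Real.sqrt (2 * (1 / (4 * ξ ^ 2)))), 1,
    1 / Real.sqrt (2 * (1 / (4 * ξ ^ 2))), by positivity, one_pos, by positivity, ?_⟩
  intro a ha
  exact log_inv_B_core (1 / (4 * ξ ^ 2)) a (by positivity) ha
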